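/- A connected graph G on at least 2 vertices is a cograph (P_4-free) if and only if either G is a single edge, or the complement of G is disconnected and every connected component of the complement induces a cograph in G, i.e. G is the join of at least two smaller cographs. -/

import Mathlib

open SimpleGraph

/-- `G` has an induced path on four vertices. -/
def HasInducedP4 {V : Type} (G : SimpleGraph V) : Prop :=
  ∃ a b c d : V, a ≠ b ∧ a ≠ c ∧ a ≠ d ∧ b ≠ c ∧ b ≠ d ∧ c ≠ d ∧
    G.Adj a b ∧ G.Adj b c ∧ G.Adj c d ∧ ¬ G.Adj a c ∧ ¬ G.Adj a d ∧ ¬ G.Adj b d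

lemma hasInducedP4_compl_of {V : Type} {G : SimpleGraph V} (h : HasInducedP4 G) :
    HasInducedP4 Gᶜ := by
  obtain ⟨a,b,c,d,hab,hac,had,hbc,hbd,hcd,eab,ebc,ecd,nac,nad,nbd⟩ := h
  exact ⟨c,a,d,b, Ne.symm hac, hcd, Ne.symm hbc, had, hab, Ne.symm hbd,
    (compl_adj G c a).2 ⟨Ne.symm hac, fun h => nac h.symm⟩,
    (compl_adj G a d).2 ⟨had, nad⟩,
    (compl_adj G d b).2 ⟨Ne.symm hbd, fun h => nbd h.symm⟩,
    fun h => ((compl_adj G c d).1 h).2 ecd,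
    fun h => ((compl_adj G c b).1 h).2 ebc.symm,
    fun h => ((compl_adj G a b).1 h).2 eab⟩

lemma hasInducedP4_of_induce {V : Type} {G : SimpleGraph V} {s : Set V}
    (h : HasInducedP4 (G.induce s)) : HasInducedP4 G := by
  obtain ⟨a,b,c,d,hab,hac,had,hbc,hbd,hcd,eab,ebc,ecd,nac,nad,nbd⟩ := h
  exact ⟨a,b,c,d, Subtype.coe_ne_coe.2 hab, Subtype.coe_ne_coe.2 hac, Subtype.coe_ne_coe.2 had,
    Subtype.coe_ne_coe.2 hbc, Subtype.coe_ne_coe.2 hbd, Subtype.coe_ne_coe.2 hcd,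
    eab, ebc, ecd, nac, nad, nbd⟩

lemma adj_of_reachable_ne {V : Type} {G : SimpleGraph V} {a b : V}
    (h : G.Reachable a b) (hne : a ≠ b) : ∃ c, G.Adj a c := by
  obtain ⟨p⟩ := h
  cases p with
  | nil => exact absurd rfl hne
  | cons h _ => exact ⟨_, h⟩

lemma compl_induce {V : Type} (G : SimpleGraph V) (s : Set V) :
    (G.induce s)ᶜ = Gᶜ.induce s := by
  ext a b
  constructor
  · rintro ⟨h1, h2⟩
    exact ⟨Subtype.coe_ne_coe.2 h1, h2⟩
  · rintro ⟨h1, h2⟩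
    exact ⟨Subtype.coe_ne_coe.1 h1, h2⟩

lemma reach_to_nbr {V : Type} {G : SimpleGraph V} {v x : V}
    (p : G.Walk x v) (hx : x ∈ ({v}ᶜ : Set V)) :
    ∃ w : ↥({v}ᶜ : Set V), G.Adj v ↑w ∧ (G.induce {v}ᶜ).Reachable ⟨x, hx⟩ w := by
  induction p with
  | nil => exact absurd rfl hx
  | @cons x y v h p ih =>
    by_cases hyv : y = v
    · subst hyv
      exact ⟨⟨x, hx⟩, h.symm, Reachable.refl _⟩
    · obtain ⟨w, hvw, hr⟩ := ih hyv
      have hadj : (G.induce ({v}ᶜ : Set V)).Adj ⟨x, hx⟩ ⟨y, hyv⟩ := h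
      exact ⟨w, hvw, hadj.reachable.trans hr⟩

lemma find_pair {V : Type} {G : SimpleGraph V} {v : V}
    {u w : ↥({v}ᶜ : Set V)} (p : (G.induce {v}ᶜ).Walk u w)
    (h1 : ¬ G.Adj v ↑u) (h2 : G.Adj v ↑w) :
    ∃ u' w' : ↥({v}ᶜ : Set V), (G.induce {v}ᶜ).Adj u' w' ∧ ¬ G.Adj v ↑u' ∧ G.Adj v ↑w' ∧
      (G.induce {v}ᶜ).Reachable u u' := by
  induction p with
  | nil => exact absurd h2 h1
  | @cons u y w h p ih =>
    by_cases hy : G.Adj v ↑y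
    · exact ⟨u, y, h, h1, hy, Reachable.refl _⟩
    · obtain ⟨u', w', ha, h1', h2', hr⟩ := ih hy h2
      exact ⟨u', w', ha, h1', h2', h.reachable.trans hr⟩

lemma p4_of_cut {V : Type} {G : SimpleGraph V} (v : V)
    (hG : G.Connected) (hGc : Gᶜ.Connected)
    (a b : ↥({v}ᶜ : Set V)) (hab : ¬ (G.induce {v}ᶜ).Reachable a b) :
    HasInducedP4 G := by
  have key : ∀ x : ↥({v}ᶜ : Set V), ∃ w : ↥({v}ᶜ : Set V),
      G.Adj v ↑w ∧ (G.induce {v}ᶜ).Reachable x w := by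
    intro x
    obtain ⟨p⟩ := hG.preconnected ↑x v
    obtain ⟨w, hvw, hr⟩ := reach_to_nbr p x.2
    exact ⟨w, hvw, hr⟩
  obtain ⟨wa, hwa, hra⟩ := key a
  obtain ⟨wb, hwb, hrb⟩ := key b
  have hwab : ¬ (G.induce {v}ᶜ).Reachable wa wb :=
    fun h => hab (hra.trans (h.trans hrb.symm))
  obtain ⟨u0, hu0⟩ : ∃ c, Gᶜ.Adj v c :=
    adj_of_reachable_ne (hGc.preconnected v ↑a) (Ne.symm a.2)
  have hu0v : u0 ∈ ({v}ᶜ : Set V) := hu0.ne'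
  have hvu : ¬ G.Adj v ↑(⟨u0, hu0v⟩ : ↥({v}ᶜ : Set V)) := hu0.2
  obtain ⟨w, hvw, hruw⟩ := key ⟨u0, hu0v⟩
  have hcases : ¬ (G.induce {v}ᶜ).Reachable w wa ∨ ¬ (G.induce {v}ᶜ).Reachable w wb := by
    by_contra h
    push_neg at h
    exact hwab (h.1.symm.trans h.2)
  obtain ⟨x, hvx, hwx⟩ : ∃ x : ↥({v}ᶜ : Set V), G.Adj v ↑x ∧
      ¬ (G.induce {v}ᶜ).Reachable w x := by
    rcases hcases with h | h
    exacts [⟨wa, hwa, h⟩, ⟨wb, hwb, h⟩]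
  obtain ⟨p⟩ := id hruw
  obtain ⟨u', w', hadj, hvu', hvw', hru'⟩ := find_pair p hvu hvw
  have hru'w : (G.induce {v}ᶜ).Reachable u' w := hru'.symm.trans hruw
  have hrw'w : (G.induce {v}ᶜ).Reachable w' w := hadj.symm.reachable.trans hru'w
  have nxw' : ¬ G.Adj ↑x ↑w' := by
    intro h
    exact hwx (hrw'w.symm.trans (show (G.induce {v}ᶜ).Adj w' x from h.symm).reachable)
  have nxu' : ¬ G.Adj ↑x ↑u' := by
    intro h
    exact hwx (hru'w.symm.trans (show (G.induce {v}ᶜ).Adj u' x from h.symm).reachable)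
  have hxw' : (x : V) ≠ ↑w' := by
    intro h
    apply hwx
    rw [show x = w' from Subtype.coe_injective h]
    exact hrw'w.symm
  have hxu' : (x : V) ≠ ↑u' := by
    intro h
    apply hwx
    rw [show x = u' from Subtype.coe_injective h]
    exact hru'w.symm
  refine ⟨↑x, v, ↑w', ↑u', x.2, hxw', hxu', Ne.symm w'.2, Ne.symm u'.2,
    Subtype.coe_ne_coe.2 hadj.ne', hvx.symm, hvw', hadj.symm, ?_, ?_, hvu'⟩
  · exact fun h => nxw' h
  · exact fun h => nxu' h

lemma exists_not_reachable {V : Type} {G : SimpleGraph V} (h : ¬ G.Connected)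
    (hne : Nonempty V) : ∃ a b, ¬ G.Reachable a b := by
  rw [connected_iff] at h
  push_neg at h
  have h2 : ¬ G.Preconnected := fun hp => (h hp).false hne.some
  unfold SimpleGraph.Preconnected at h2
  push_neg at h2
  exact h2

lemma p4_of_conn_conn : ∀ (n : ℕ) (V : Type) [Fintype V] (G : SimpleGraph V),
    Fintype.card V = n → 2 ≤ n → G.Connected → Gᶜ.Connected → HasInducedP4 G := by
  intro n
  induction n using Nat.strong_induction_on with
  | _ n ih =>
    intro V _ G hn h2 hG hGc
    letI := Classical.decEq V
    rcases Nat.lt_or_ge n 3 with h3 | h3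
    · -- exactly two vertices: contradiction
      have hcard2 : Fintype.card V = 2 := by omega
      obtain ⟨a, b, hab, huniv⟩ := Finset.card_eq_two.1
        (by rw [Finset.card_univ, hcard2] : (Finset.univ : Finset V).card = 2)
      have hmem : ∀ c : V, c = a ∨ c = b := by
        intro c
        have := Finset.mem_univ c
        rw [huniv] at this
        simpa using this
      obtain ⟨c, hac⟩ := adj_of_reachable_ne (hG.preconnected a b) hab
      have hcb : c = b := by
        rcases hmem c with h | h
        · exact absurd h.symm hac.ne
        · exact h
      obtain ⟨c', hac'⟩ := adj_of_reachable_ne (hGc.preconnected a b) hab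
      have hcb' : c' = b := by
        rcases hmem c' with h | h
        · exact absurd h.symm hac'.ne
        · exact h
      exact absurd (hcb ▸ hac) (hcb' ▸ hac'.2)
    · obtain ⟨v⟩ := hG.nonempty
      have hcards : Fintype.card ↥({v}ᶜ : Set V) = n - 1 := by
        rw [Fintype.card_compl_set]
        simp [hn]
      have hne : Nonempty ↥({v}ᶜ : Set V) := by
        rw [← Fintype.card_pos_iff]
        omega
      by_cases hH : (G.induce {v}ᶜ).Connected
      · by_cases hHc : ((G.induce {v}ᶜ))ᶜ.Connected
        · exact hasInducedP4_of_induce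
            (ih (n-1) (by omega) _ _ hcards (by omega) hH hHc)
        · rw [compl_induce] at hHc
          obtain ⟨a, b, hab⟩ := exists_not_reachable hHc hne
          have hG' : (Gᶜ)ᶜ.Connected := by rwa [compl_compl]
          have := p4_of_cut (G := Gᶜ) v hGc hG' a b hab
          exact (compl_compl G) ▸ hasInducedP4_compl_of this
      · obtain ⟨a, b, hab⟩ := exists_not_reachable hH hne
        exact p4_of_cut v hG hGc a b hab

/-- A cograph is a `P₄`-free graph. -/
def IsCograph {V : Type} (G : SimpleGraph V) : Prop := ¬ HasInducedP4 G

/-- a connected graph on at least two vertices is a cograph iff it is a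
single edge, or its complement is disconnected and every connected component of the
complement induces a cograph in `G` (i.e. `G` is a join of smaller cographs). -/
theorem stmt12 (V : Type) [Fintype V] (G : SimpleGraph V) (hG : G.Connected)
    (hcard : 2 ≤ Fintype.card V) :
    IsCograph G ↔
      (Fintype.card V = 2 ∨
        (¬ Gᶜ.Connected ∧ ∀ C : Gᶜ.ConnectedComponent,
          IsCograph (SimpleGraph.induce C.supp G))) := by
  constructor
  · intro hcog
    right
    refine ⟨fun h => hcog (p4_of_conn_conn (Fintype.card V) V G rfl hcard hG h), ?_⟩
    intro C hP4
    exact hcog (hasInducedP4_of_induce hP4)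
  · rintro (h2 | ⟨hdis, hcomp⟩) hp4
    · obtain ⟨a,b,c,d,hab,hac,had,hbc,hbd,hcd,-,-,-,-,-,-⟩ := hp4
      classical
      have h3 : ({a,b,c} : Finset V).card = 3 := by
        rw [Finset.card_insert_of_notMem (by simp [hab, hac]),
            Finset.card_insert_of_notMem (by simp [hbc]), Finset.card_singleton]
      have hle := Finset.card_le_univ ({a,b,c} : Finset V)
      rw [h3] at hle
      omega
    · obtain ⟨a,b,c,d,hab,hac,had,hbc,hbd,hcd,eab,ebc,ecd,nac,nad,nbd⟩ := hp4
      have cac : Gᶜ.Adj a c := (compl_adj G a c).2 ⟨hac, nac⟩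
      have cad : Gᶜ.Adj a d := (compl_adj G a d).2 ⟨had, nad⟩
      have cbd : Gᶜ.Adj b d := (compl_adj G b d).2 ⟨hbd, nbd⟩
      set C := Gᶜ.connectedComponentMk a with hC
      have hma : a ∈ C.supp := rfl
      have hmb : b ∈ C.supp := by
        show Gᶜ.connectedComponentMk b = C
        exact ConnectedComponent.sound (cbd.reachable.trans cad.reachable.symm)
      have hmc : c ∈ C.supp := by
        show Gᶜ.connectedComponentMk c = C
        exact ConnectedComponent.sound cac.reachable.symm
      have hmd : d ∈ C.supp := by
        show Gᶜ.connectedComponentMk d = C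
        exact ConnectedComponent.sound cad.reachable.symm
      refine hcomp C ⟨⟨a, hma⟩, ⟨b, hmb⟩, ⟨c, hmc⟩, ⟨d, hmd⟩,
        Subtype.coe_ne_coe.1 hab, Subtype.coe_ne_coe.1 hac, Subtype.coe_ne_coe.1 had,
        Subtype.coe_ne_coe.1 hbc, Subtype.coe_ne_coe.1 hbd, Subtype.coe_ne_coe.1 hcd,
        eab, ebc, ecd, nac, nad, nbd⟩
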